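/- Let J be a B(H)-ideal and 𝒮 ⊆ J a set whose cardinality is strictly less than the cardinality of the continuum. Then J(𝒮)J = (𝒮)_J if and only if (𝒮)J = (𝒮), where J(𝒮)J is the set of finite sums Σ A_iX_iB_i with A_i, B_i ∈ J and X_i ∈ (𝒮). -/

import Mathlib

open Pointwise

variable {H : Type*} [NormedAddCommGroup H] [InnerProductSpace ℂ H] [CompleteSpace H]
  [TopologicalSpace.SeparableSpace H]

/-- A `B(H)`-ideal: a two-sided ideal of the algebra `B(H)` of bounded operators on `H`. -/
def IsBHIdeal (J : Set (H →L[ℂ] H)) : Prop :=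
  0 ∈ J ∧ (∀ x ∈ J, ∀ y ∈ J, x + y ∈ J) ∧
    (∀ (A : H →L[ℂ] H), ∀ x ∈ J, A * x ∈ J) ∧
    (∀ (A : H →L[ℂ] H), ∀ x ∈ J, x * A ∈ J)

/-- `I` is a `J`-ideal (a subideal): a `ℂ`-linear subspace of `B(H)` contained in `J` that is
closed under left and right multiplication by elements of `J`. -/
def IsSubideal (J I : Set (H →L[ℂ] H)) : Prop :=
  I ⊆ J ∧ 0 ∈ I ∧ (∀ x ∈ I, ∀ y ∈ I, x + y ∈ I) ∧
    (∀ (c : ℂ), ∀ x ∈ I, c • x ∈ I) ∧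
    (∀ A ∈ J, ∀ x ∈ I, A * x ∈ I ∧ x * A ∈ I)

/-- `(𝒮)_J`, the smallest `J`-ideal containing the set `𝒮`. -/
def subidealGen (J 𝒮 : Set (H →L[ℂ] H)) : Set (H →L[ℂ] H) :=
  ⋂₀ {I | IsSubideal J I ∧ 𝒮 ⊆ I}

/-- `(𝒮)`, the smallest `B(H)`-ideal containing the set `𝒮`. -/
def idealGen (𝒮 : Set (H →L[ℂ] H)) : Set (H →L[ℂ] H) :=
  ⋂₀ {I | IsBHIdeal I ∧ 𝒮 ⊆ I}

/-- The product `IJ` of two ideals: the set of finite sums `Σ Xᵢ Yᵢ` with `Xᵢ ∈ I`, `Yᵢ ∈ J`. -/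
def idealProd (I J : Set (H →L[ℂ] H)) : Set (H →L[ℂ] H) :=
  {T | ∃ (n : ℕ) (X Y : Fin n → (H →L[ℂ] H)),
    (∀ i, X i ∈ I) ∧ (∀ i, Y i ∈ J) ∧ T = ∑ i, X i * Y i}

/-- `J(𝒮)J`: the set of finite sums `Σ Aᵢ Xᵢ Bᵢ` with `Aᵢ, Bᵢ ∈ J` and `Xᵢ ∈ (𝒮)`. -/
def JSJ (J 𝒮 : Set (H →L[ℂ] H)) : Set (H →L[ℂ] H) :=
  {T | ∃ (n : ℕ) (A X B : Fin n → (H →L[ℂ] H)),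
    (∀ i, A i ∈ J) ∧ (∀ i, B i ∈ J) ∧ (∀ i, X i ∈ idealGen 𝒮) ∧
    T = ∑ i, A i * X i * B i}

/-- `U_J(H)`: the unitaries of the form `1 + A` with `A ∈ J`. -/
def unitaryJ (J : Set (H →L[ℂ] H)) : Set (H →L[ℂ] H) :=
  {U | U ∈ unitary (H →L[ℂ] H) ∧ U - 1 ∈ J}


set_option linter.unusedSectionVars false

open ContinuousLinearMap in
theorem exists_star_eq_mul (T : H →L[ℂ] H) : ∃ W : H →L[ℂ] H, star T = W * T * W := by
  classical
  set A : H →L[ℂ] H := CFC.sqrt (star T * T) with hA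
  have hnn : (0 : H →L[ℂ] H) ≤ star T * T := star_mul_self_nonneg T
  have hsq : A * A = star T * T := CFC.sqrt_mul_sqrt_self _ hnn
  have hAnn : (0:H →L[ℂ] H) ≤ A := CFC.sqrt_nonneg _
  have hAsa : IsSelfAdjoint A := hAnn.isSelfAdjoint
  have hadj : adjoint A = A := by rw [← star_eq_adjoint]; exact hAsa
  have hnorm : ∀ x, ‖A x‖ = ‖T x‖ := by
    intro x
    have h1 : (inner ℂ (A x) (A x) : ℂ) = inner ℂ (T x) (T x) := by
      rw [← adjoint_inner_right, hadj]
      rw [← ContinuousLinearMap.comp_apply, ← mul_def, hsq]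
      rw [mul_def, ContinuousLinearMap.comp_apply, star_eq_adjoint, adjoint_inner_right]
    have h2 := inner_self_eq_norm_sq_to_K (𝕜 := ℂ) (A x)
    have h3 := inner_self_eq_norm_sq_to_K (𝕜 := ℂ) (T x)
    rw [h2, h3] at h1
    have h4 : (‖A x‖:ℝ)^2 = ‖T x‖^2 := by exact_mod_cast h1
    exact (sq_eq_sq₀ (norm_nonneg _) (norm_nonneg _)).mp h4
  have hker : ∀ u v : H, T u = T v → A u = A v := by
    intro u v huv
    have : ‖A u - A v‖ = 0 := by
      rw [← map_sub, hnorm, map_sub, huv, sub_self, norm_zero]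
    rwa [norm_eq_zero, sub_eq_zero] at this
  set R : Submodule ℂ H := LinearMap.range (T : H →ₗ[ℂ] H) with hR
  set M : Submodule ℂ H := R.topologicalClosure with hM
  haveI : CompleteSpace M := R.isClosed_topologicalClosure.completeSpace_coe
  have hRM : R ≤ M := R.le_topologicalClosure
  -- choice function
  have hmem : ∀ y : ↥R, ∃ x, T x = (y : H) := fun y => LinearMap.mem_range.mp y.2
  set c : ↥R → H := fun y => (hmem y).choose with hc
  have hcspec : ∀ y : ↥R, T (c y) = (y : H) := fun y => (hmem y).choose_spec
  set gfun : ↥R → H := fun y => A (c y) with hg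
  have hgT : ∀ x : H, gfun ⟨T x, LinearMap.mem_range_self _ x⟩ = A x := by
    intro x
    exact hker _ _ (by rw [hcspec])
  have hgadd : ∀ y z : ↥R, gfun (y + z) = gfun y + gfun z := by
    intro y z
    have : T (c (y+z)) = T (c y + c z) := by
      rw [hcspec, map_add, hcspec, hcspec]; rfl
    rw [hg]; simp only
    rw [hker _ _ this, map_add]
  have hgsmul : ∀ (a : ℂ) (y : ↥R), gfun (a • y) = a • gfun y := by
    intro a y
    have : T (c (a • y)) = T (a • c y) := by
      rw [hcspec, map_smul, hcspec]; rfl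
    rw [hg]; simp only
    rw [hker _ _ this, map_smul]
  have hgnorm : ∀ y : ↥R, ‖gfun y‖ = ‖y‖ := by
    intro y
    rw [hg]; simp only
    rw [hnorm, hcspec]; rfl
  set f : ↥R →ₗᵢ[ℂ] H := ⟨⟨⟨gfun, hgadd⟩, hgsmul⟩, hgnorm⟩ with hf
  set eiso : ↥R →ₗᵢ[ℂ] ↥M := ⟨Submodule.inclusion hRM, fun x => rfl⟩ with he
  have hdense : DenseRange eiso.toContinuousLinearMap := by
    intro m
    rw [closure_subtype]
    have himg : (Subtype.val : ↥M → H) '' (Set.range eiso.toContinuousLinearMap) = (R : Set H) := by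
      ext x
      constructor
      · rintro ⟨z, ⟨y, rfl⟩, rfl⟩
        exact y.2
      · rintro hx
        exact ⟨eiso ⟨x, hx⟩, ⟨⟨x, hx⟩, rfl⟩, rfl⟩
    rw [himg]
    exact m.2
  have huni : IsUniformInducing eiso.toContinuousLinearMap :=
    eiso.isometry.isUniformInducing
  set Wm : ↥M →L[ℂ] H :=
    ContinuousLinearMap.extend f.toContinuousLinearMap eiso.toContinuousLinearMap with hWm
  have hWme : ∀ y : ↥R, Wm (eiso y) = gfun y := by
    intro y
    exact ContinuousLinearMap.extend_eq _ hdense huni y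
  set W : H →L[ℂ] H := Wm.comp (M.orthogonalProjectionOnto) with hW
  have hWT : ∀ x : H, W (T x) = A x := by
    intro x
    have hTxM : T x ∈ M := hRM (LinearMap.mem_range_self _ x)
    have hproj : M.orthogonalProjectionOnto (T x) = eiso ⟨T x, LinearMap.mem_range_self _ x⟩ := by
      have := Submodule.orthogonalProjectionOnto_mem_subspace_eq_self (K := M) ⟨T x, hTxM⟩
      apply Subtype.ext
      rw [this]
      rfl
    rw [hW, ContinuousLinearMap.comp_apply, hproj, hWme, hgT]
  have hW0 : ∀ y ∈ Mᗮ, W y = 0 := by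
    intro y hy
    rw [hW, ContinuousLinearMap.comp_apply,
      Submodule.orthogonalProjectionOnto_apply_of_mem_orthogonal hy, map_zero]
  refine ⟨W, ?_⟩
  ext y
  have hdecomp := by simpa only [Submodule.starProjection_apply] using M.starProjection_add_starProjection_orthogonal y
  set m : H := (M.orthogonalProjectionOnto y : H) with hm
  set n : H := (Mᗮ.orthogonalProjectionOnto y : H) with hn
  have hmM : m ∈ M := (M.orthogonalProjectionOnto y).2
  have hnM : n ∈ Mᗮ := (Mᗮ.orthogonalProjectionOnto y).2
  have claimA : ∀ z, z ∈ M → star T z = W (T (W z)) := by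
    have hclosed : IsClosed {z : H | star T z = W (T (W z))} :=
      isClosed_eq (star T).continuous (W.continuous.comp (T.continuous.comp W.continuous))
    have hsub : (R : Set H) ⊆ {z : H | star T z = W (T (W z))} := by
      rintro _ ⟨x, rfl⟩
      show star T (T x) = W (T (W (T x)))
      rw [hWT, hWT]
      rw [← ContinuousLinearMap.mul_apply, ← hsq, ContinuousLinearMap.mul_apply]
    intro z hz
    have : (M : Set H) ⊆ {z : H | star T z = W (T (W z))} := by
      rw [hM, Submodule.topologicalClosure_coe]
      exact closure_minimal hsub hclosed
    exact this hz
  have claimB : star T n = 0 := by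
    rw [← inner_self_eq_zero (𝕜 := ℂ)]
    rw [star_eq_adjoint, ContinuousLinearMap.adjoint_inner_left]
    have : T ((adjoint T) n) ∈ M := hRM (LinearMap.mem_range_self _ _)
    exact (Submodule.mem_orthogonal' M n).mp hnM _ this
  have hWn : W n = 0 := hW0 n hnM
  show star T y = (W * T * W) y
  have hy : y = m + n := hdecomp.symm
  rw [hy, map_add, map_add]
  rw [claimA m hmM, claimB]
  have : (W * T * W) n = 0 := by
    show W (T (W n)) = 0
    rw [hWn, map_zero, map_zero]
  rw [this, add_zero, add_zero]
  rfl


lemma IsBHIdeal.star_mem {J : Set (H →L[ℂ] H)} (hJ : IsBHIdeal J) {T : H →L[ℂ] H}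
    (hT : T ∈ J) : star T ∈ J := by
  obtain ⟨W, hW⟩ := exists_star_eq_mul T
  rw [hW, mul_assoc]
  exact hJ.2.2.1 W _ (hJ.2.2.2 W T hT)

-- generic finite-sum membership

lemma aux_fin_sum_mem {P : Set (H →L[ℂ] H)} (h0 : (0:H →L[ℂ] H) ∈ P)
    (hadd : ∀ x ∈ P, ∀ y ∈ P, x + y ∈ P) {n : ℕ} (f : Fin n → H →L[ℂ] H)
    (hf : ∀ i, f i ∈ P) : ∑ i, f i ∈ P :=
  Finset.sum_induction f (· ∈ P) (fun a b ha hb => hadd a ha b hb) h0 (fun i _ => hf i)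

lemma IsBHIdeal.smul_mem {J : Set (H →L[ℂ] H)} (hJ : IsBHIdeal J) (c : ℂ)
    {x : H →L[ℂ] H} (hx : x ∈ J) : c • x ∈ J := by
  have := hJ.2.2.1 (c • (1 : H →L[ℂ] H)) x hx
  rwa [smul_mul_assoc, one_mul] at this

lemma IsBHIdeal.sum_mem {J : Set (H →L[ℂ] H)} (hJ : IsBHIdeal J) {n : ℕ}
    (f : Fin n → H →L[ℂ] H) (hf : ∀ i, f i ∈ J) : ∑ i, f i ∈ J :=
  aux_fin_sum_mem hJ.1 hJ.2.1 f hf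

-- zero, add, single for idealProd
lemma idealProd_zero (I J : Set (H →L[ℂ] H)) : (0:H →L[ℂ] H) ∈ idealProd I J :=
  ⟨0, fun i => i.elim0, fun i => i.elim0, fun i => i.elim0, fun i => i.elim0, by simp⟩

lemma idealProd_add {I J : Set (H →L[ℂ] H)} :
    ∀ x ∈ idealProd I J, ∀ y ∈ idealProd I J, x + y ∈ idealProd I J := by
  rintro x ⟨n, X, Y, hX, hY, rfl⟩ y ⟨m, X', Y', hX', hY', rfl⟩
  refine ⟨n + m, Fin.append X X', Fin.append Y Y', ?_, ?_, ?_⟩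
  · intro i
    refine Fin.addCases (fun j => ?_) (fun j => ?_) i <;> simp [Fin.append_left, Fin.append_right]
    exacts [hX j, hX' j]
  · intro i
    refine Fin.addCases (fun j => ?_) (fun j => ?_) i <;> simp [Fin.append_left, Fin.append_right]
    exacts [hY j, hY' j]
  · rw [Fin.sum_univ_add]
    simp [Fin.append_left, Fin.append_right]

lemma idealProd_single {I J : Set (H →L[ℂ] H)} {X Y : H →L[ℂ] H} (hX : X ∈ I) (hY : Y ∈ J) :
    X * Y ∈ idealProd I J :=
  ⟨1, fun _ => X, fun _ => Y, fun _ => hX, fun _ => hY, by simp⟩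

-- zero, add, single, smul for JSJ
lemma JSJ_zero (J 𝒮 : Set (H →L[ℂ] H)) : (0:H →L[ℂ] H) ∈ JSJ J 𝒮 :=
  ⟨0, fun i => i.elim0, fun i => i.elim0, fun i => i.elim0,
    fun i => i.elim0, fun i => i.elim0, fun i => i.elim0, by simp⟩

lemma JSJ_add {J 𝒮 : Set (H →L[ℂ] H)} :
    ∀ x ∈ JSJ J 𝒮, ∀ y ∈ JSJ J 𝒮, x + y ∈ JSJ J 𝒮 := by
  rintro x ⟨n, A, X, B, hA, hB, hX, rfl⟩ y ⟨m, A', X', B', hA', hB', hX', rfl⟩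
  refine ⟨n + m, Fin.append A A', Fin.append X X', Fin.append B B', ?_, ?_, ?_, ?_⟩
  · intro i
    refine Fin.addCases (fun j => ?_) (fun j => ?_) i <;> simp [Fin.append_left, Fin.append_right]
    exacts [hA j, hA' j]
  · intro i
    refine Fin.addCases (fun j => ?_) (fun j => ?_) i <;> simp [Fin.append_left, Fin.append_right]
    exacts [hB j, hB' j]
  · intro i
    refine Fin.addCases (fun j => ?_) (fun j => ?_) i <;> simp [Fin.append_left, Fin.append_right]
    exacts [hX j, hX' j]
  · rw [Fin.sum_univ_add]
    simp [Fin.append_left, Fin.append_right]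

lemma JSJ_single {J 𝒮 : Set (H →L[ℂ] H)} {A X B : H →L[ℂ] H} (hA : A ∈ J) (hB : B ∈ J)
    (hX : X ∈ idealGen 𝒮) : A * X * B ∈ JSJ J 𝒮 :=
  ⟨1, fun _ => A, fun _ => X, fun _ => B, fun _ => hA, fun _ => hB, fun _ => hX, by simp⟩

-- idealGen basics
lemma idealGen_isBHIdeal (𝒮 : Set (H →L[ℂ] H)) : IsBHIdeal (idealGen 𝒮) := by
  refine ⟨?_, ?_, ?_, ?_⟩
  · exact fun I hI => hI.1.1
  · intro x hx y hy I hI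
    exact hI.1.2.1 x (hx I hI) y (hy I hI)
  · intro A x hx I hI
    exact hI.1.2.2.1 A x (hx I hI)
  · intro A x hx I hI
    exact hI.1.2.2.2 A x (hx I hI)

lemma subset_idealGen (𝒮 : Set (H →L[ℂ] H)) : 𝒮 ⊆ idealGen 𝒮 :=
  fun x hx I hI => hI.2 hx

lemma idealGen_min {𝒮 I : Set (H →L[ℂ] H)} (hI : IsBHIdeal I) (h : 𝒮 ⊆ I) :
    idealGen 𝒮 ⊆ I :=
  Set.sInter_subset_of_mem ⟨hI, h⟩

-- description of idealGen as finite sums C S D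
lemma mem_idealGen_iff {𝒮 : Set (H →L[ℂ] H)} {T : H →L[ℂ] H} :
    T ∈ idealGen 𝒮 ↔ ∃ (n : ℕ) (C S D : Fin n → (H →L[ℂ] H)),
      (∀ i, S i ∈ 𝒮) ∧ T = ∑ i, C i * S i * D i := by
  set G : Set (H →L[ℂ] H) := {T | ∃ (n : ℕ) (C S D : Fin n → (H →L[ℂ] H)),
      (∀ i, S i ∈ 𝒮) ∧ T = ∑ i, C i * S i * D i} with hG
  have hGideal : IsBHIdeal G := by
    refine ⟨⟨0, fun i => i.elim0, fun i => i.elim0, fun i => i.elim0, fun i => i.elim0, by simp⟩,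
      ?_, ?_, ?_⟩
    · rintro x ⟨n, C, S, D, hS, rfl⟩ y ⟨m, C', S', D', hS', rfl⟩
      refine ⟨n + m, Fin.append C C', Fin.append S S', Fin.append D D', ?_, ?_⟩
      · intro i
        refine Fin.addCases (fun j => ?_) (fun j => ?_) i <;>
          simp [Fin.append_left, Fin.append_right]
        exacts [hS j, hS' j]
      · rw [Fin.sum_univ_add]
        simp [Fin.append_left, Fin.append_right]
    · rintro A x ⟨n, C, S, D, hS, rfl⟩
      refine ⟨n, fun i => A * C i, S, D, hS, ?_⟩
      rw [Finset.mul_sum]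
      exact Finset.sum_congr rfl fun i _ => by simp [mul_assoc]
    · rintro A x ⟨n, C, S, D, hS, rfl⟩
      refine ⟨n, C, S, fun i => D i * A, hS, ?_⟩
      rw [Finset.sum_mul]
      exact Finset.sum_congr rfl fun i _ => by simp [mul_assoc]
  have h𝒮G : 𝒮 ⊆ G := by
    intro s hs
    exact ⟨1, fun _ => 1, fun _ => s, fun _ => 1, fun _ => hs, by simp⟩
  constructor
  · intro hT
    exact idealGen_min hGideal h𝒮G hT
  · intro hT
    obtain ⟨n, C, S, D, hS, rfl⟩ := hT
    exact (idealGen_isBHIdeal 𝒮).sum_mem _ fun i =>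
      (idealGen_isBHIdeal 𝒮).2.2.2 (D i) _
        ((idealGen_isBHIdeal 𝒮).2.2.1 (C i) _ (subset_idealGen 𝒮 (hS i)))

/-- for `|𝒮| < 𝔠`, `J(𝒮)J = (𝒮)_J` iff `(𝒮)` is `J`-soft. -/
theorem JSJ_eq_subidealGen_iff_soft (J 𝒮 : Set (H →L[ℂ] H)) (hJ : IsBHIdeal J)
    (hinf : ¬FiniteDimensional ℂ H) (h𝒮 : 𝒮 ⊆ J)
    (hcard : Cardinal.mk 𝒮 < Cardinal.continuum) :
    JSJ J 𝒮 = subidealGen J 𝒮 ↔ idealProd (idealGen 𝒮) J = idealGen 𝒮 := by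
  constructor
  · intro h
    apply Set.Subset.antisymm
    · rintro T ⟨n, X, Y, hX, hY, rfl⟩
      exact (idealGen_isBHIdeal 𝒮).sum_mem _ fun i =>
        (idealGen_isBHIdeal 𝒮).2.2.2 (Y i) _ (hX i)
    · refine idealGen_min ⟨idealProd_zero _ _, idealProd_add, ?_, ?_⟩ ?_
      · rintro A x ⟨n, X, Y, hX, hY, rfl⟩
        refine ⟨n, fun i => A * X i, Y,
          fun i => (idealGen_isBHIdeal 𝒮).2.2.1 A _ (hX i), hY, ?_⟩
        rw [Finset.mul_sum]
        exact Finset.sum_congr rfl fun i _ => (mul_assoc _ _ _).symm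
      · rintro A x ⟨n, X, Y, hX, hY, rfl⟩
        refine ⟨n, X, fun i => Y i * A, hX, fun i => hJ.2.2.2 A _ (hY i), ?_⟩
        rw [Finset.sum_mul]
        exact Finset.sum_congr rfl fun i _ => mul_assoc _ _ _
      · intro s hs
        have hs' : s ∈ subidealGen J 𝒮 := fun I' hI' => hI'.2 hs
        rw [← h] at hs'
        obtain ⟨n, A, X, B, hA, hB, hX, rfl⟩ := hs'
        refine aux_fin_sum_mem (idealProd_zero _ _) idealProd_add _ fun i => ?_
        exact idealProd_single ((idealGen_isBHIdeal 𝒮).2.2.1 (A i) _ (hX i)) (hB i)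
  · intro h
    have hstarI : ∀ T ∈ idealGen 𝒮, star T ∈ idealGen 𝒮 :=
      fun T hT => (idealGen_isBHIdeal 𝒮).star_mem hT
    have step1 : ∀ T ∈ idealGen 𝒮, ∃ (n : ℕ) (A Z : Fin n → (H →L[ℂ] H)),
        (∀ i, A i ∈ J) ∧ (∀ i, Z i ∈ idealGen 𝒮) ∧ T = ∑ i, A i * Z i := by
      intro T hT
      have h1 : star T ∈ idealProd (idealGen 𝒮) J := by rw [h]; exact hstarI T hT
      obtain ⟨n, X, Y, hX, hY, hEq⟩ := h1
      refine ⟨n, fun i => star (Y i), fun i => star (X i),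
        fun i => hJ.star_mem (hY i), fun i => hstarI _ (hX i), ?_⟩
      calc T = star (star T) := (star_star T).symm
        _ = star (∑ i, X i * Y i) := by rw [hEq]
        _ = ∑ i, star (Y i) * star (X i) := by rw [star_sum]; simp [star_mul]
    have hkey : 𝒮 ⊆ JSJ J 𝒮 := by
      intro s hs
      have hsI : s ∈ idealProd (idealGen 𝒮) J := by rw [h]; exact subset_idealGen 𝒮 hs
      obtain ⟨n, X, Y, hX, hY, rfl⟩ := hsI
      refine aux_fin_sum_mem (JSJ_zero J 𝒮) JSJ_add _ fun i => ?_
      obtain ⟨m, A, Z, hA, hZ, hXi⟩ := step1 (X i) (hX i)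
      rw [hXi, Finset.sum_mul]
      exact aux_fin_sum_mem (JSJ_zero J 𝒮) JSJ_add _ fun k =>
        JSJ_single (hA k) (hY i) (hZ k)
    apply Set.Subset.antisymm
    · intro T hT I' hI'
      obtain ⟨⟨hsubJ, h0, hadd, hsmul, hmul⟩, h𝒮I'⟩ := hI'
      obtain ⟨n, A, X, B, hA, hB, hX, rfl⟩ := hT
      refine aux_fin_sum_mem h0 hadd _ fun i => ?_
      obtain ⟨m, C, S, D, hS, hXi⟩ := mem_idealGen_iff.mp (hX i)
      have hexp : A i * X i * B i = ∑ k, (A i * C k) * S k * (D k * B i) := by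
        rw [hXi, Finset.mul_sum, Finset.sum_mul]
        exact Finset.sum_congr rfl fun k _ => by simp [mul_assoc]
      rw [hexp]
      refine aux_fin_sum_mem h0 hadd _ fun k => ?_
      have h1 : A i * C k ∈ J := hJ.2.2.2 (C k) (A i) (hA i)
      have h2 : D k * B i ∈ J := hJ.2.2.1 (D k) (B i) (hB i)
      exact (hmul _ h2 _ ((hmul _ h1 _ (h𝒮I' (hS k))).1)).2
    · apply Set.sInter_subset_of_mem
      refine ⟨⟨?_, JSJ_zero J 𝒮, JSJ_add, ?_, ?_⟩, hkey⟩
      · rintro T ⟨n, A, X, B, hA, hB, hX, rfl⟩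
        exact hJ.sum_mem _ fun i => hJ.2.2.2 (B i) _ (hJ.2.2.2 (X i) _ (hA i))
      · rintro c T ⟨n, A, X, B, hA, hB, hX, rfl⟩
        refine ⟨n, fun i => c • A i, X, B, fun i => hJ.smul_mem c (hA i), hB, hX, ?_⟩
        rw [Finset.smul_sum]
        exact Finset.sum_congr rfl fun i _ => by rw [smul_mul_assoc, smul_mul_assoc]
      · rintro A' hA' T ⟨n, A, X, B, hA, hB, hX, rfl⟩
        constructor
        · refine ⟨n, fun i => A' * A i, X, B, fun i => hJ.2.2.1 A' _ (hA i), hB, hX, ?_⟩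
          rw [Finset.mul_sum]
          exact Finset.sum_congr rfl fun i _ => by simp [mul_assoc]
        · refine ⟨n, A, X, fun i => B i * A', hA, fun i => hJ.2.2.2 A' _ (hB i), hX, ?_⟩
          rw [Finset.sum_mul]
          exact Finset.sum_congr rfl fun i _ => by simp [mul_assoc]
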